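/- Define P(1) = p and P(n+1) = (pq)^n C_{n−1} for n ≥ 1, where p + q = 1 and 0 < q < 1/2. Then ∑_{n≥1} P(n) = 1. -/

import Mathlib

noncomputable def lsmCycleProb (p q : ℝ) (n : ℕ) : ℝ :=
  if n = 1 then p else (p * q) ^ (n - 1) * (catalan (n - 2) : ℝ)

open Finset




lemma catalan_le_four_pow' (n : ℕ) : (catalan n : ℝ) ≤ 4 ^ n := by
  have h1 : catalan n ≤ n.centralBinom := by
    calc catalan n ≤ (n + 1) * catalan n := Nat.le_mul_of_pos_left _ (Nat.succ_pos n)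
    _ = n.centralBinom := succ_mul_catalan_eq_centralBinom n
  have h2 : n.centralBinom ≤ 4 ^ n := by
    have hmem : n ∈ range (2 * n + 1) := mem_range.mpr (by omega)
    calc n.centralBinom = (2 * n).choose n := rfl
    _ ≤ ∑ i ∈ range (2 * n + 1), (2 * n).choose i :=
        Finset.single_le_sum (f := fun i => (2 * n).choose i) (fun i _ => Nat.zero_le _) hmem
    _ = 2 ^ (2 * n) := Nat.sum_range_choose (2 * n)
    _ = 4 ^ n := by rw [pow_mul]; norm_num
  calc (catalan n : ℝ) ≤ (n.centralBinom : ℝ) := by exact_mod_cast h1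
  _ ≤ ((4 ^ n : ℕ) : ℝ) := by exact_mod_cast h2
  _ = 4 ^ n := by push_cast; ring

lemma summable_cat' {x : ℝ} (hx0 : 0 ≤ x) (hx : x < 1/4) :
    Summable fun n => (catalan n : ℝ) * x ^ n := by
  have hgeo : Summable fun n : ℕ => (4 * x) ^ n :=
    summable_geometric_of_lt_one (by positivity) (by linarith)
  apply Summable.of_nonneg_of_le (fun n => by positivity) (fun n => ?_) hgeo
  calc (catalan n : ℝ) * x ^ n ≤ 4 ^ n * x ^ n :=
        mul_le_mul_of_nonneg_right (catalan_le_four_pow' n) (by positivity)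
  _ = (4 * x) ^ n := by rw [mul_pow]

lemma cat_fe' {x : ℝ} (hx0 : 0 ≤ x) (hx : x < 1/4) :
    (∑' n, (catalan n : ℝ) * x ^ n) = 1 + x * (∑' n, (catalan n : ℝ) * x ^ n) ^ 2 := by
  set S := ∑' n, (catalan n : ℝ) * x ^ n with hS
  have hsum := summable_cat' hx0 hx
  have hnorm : Summable fun n => ‖(catalan n : ℝ) * x ^ n‖ := summable_norm_iff.mpr hsum
  have hmul : S * S = ∑' n, ∑ k ∈ range (n + 1),
      ((catalan k : ℝ) * x ^ k) * ((catalan (n - k) : ℝ) * x ^ (n - k)) :=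
    tsum_mul_tsum_eq_tsum_sum_range_of_summable_norm hnorm hnorm
  have hinner : ∀ n : ℕ, ∑ k ∈ range (n + 1),
      ((catalan k : ℝ) * x ^ k) * ((catalan (n - k) : ℝ) * x ^ (n - k))
      = (catalan (n + 1) : ℝ) * x ^ n := by
    intro n
    have hterm : ∀ k ∈ range (n + 1),
        ((catalan k : ℝ) * x ^ k) * ((catalan (n - k) : ℝ) * x ^ (n - k))
        = ((catalan k * catalan (n - k) : ℕ) : ℝ) * x ^ n := by
      intro k hk
      rw [mem_range] at hk
      push_cast
      rw [show (catalan k : ℝ) * x ^ k * ((catalan (n - k) : ℝ) * x ^ (n - k))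
          = (catalan k : ℝ) * (catalan (n - k) : ℝ) * (x ^ k * x ^ (n - k)) by ring, ← pow_add]
      congr 2
      omega
    rw [Finset.sum_congr rfl hterm, ← Finset.sum_mul, ← Nat.cast_sum]
    congr 2
    rw [catalan_succ]
    exact (Finset.sum_range fun i => catalan i * catalan (n - i))
  have hx2 : x * (S * S) = ∑' n, (catalan (n + 1) : ℝ) * x ^ (n + 1) := by
    rw [hmul, tsum_congr hinner, ← tsum_mul_left]
    exact tsum_congr fun n => by ring
  have hshift : S = 1 + ∑' n, (catalan (n + 1) : ℝ) * x ^ (n + 1) := by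
    rw [hS, Summable.tsum_eq_zero_add hsum]
    norm_num
  calc S = 1 + ∑' n, (catalan (n + 1) : ℝ) * x ^ (n + 1) := hshift
  _ = 1 + x * (S * S) := by rw [hx2]
  _ = 1 + x * S ^ 2 := by ring

lemma cat_sum_or' (q : ℝ) (hq0 : 0 < q) (hq : q < 1/2) :
    (∑' n, (catalan n : ℝ) * ((1 - q) * q) ^ n) = 1 / (1 - q) ∨
    (∑' n, (catalan n : ℝ) * ((1 - q) * q) ^ n) = 1 / q := by
  have hx0 : (0:ℝ) ≤ (1 - q) * q := by nlinarith
  have hxlt : (1 - q) * q < 1/4 := by nlinarith [sq_nonneg (1/2 - q)]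
  have hfe := cat_fe' hx0 hxlt
  set S := ∑' n, (catalan n : ℝ) * ((1 - q) * q) ^ n with hS
  have hfac : ((1 - q) * S - 1) * (q * S - 1) = 0 := by nlinarith [hfe]
  rcases mul_eq_zero.mp hfac with h | h
  · left
    have h1q : (1:ℝ) - q ≠ 0 := by linarith
    field_simp
    linarith
  · right
    field_simp
    linarith

lemma cat_sum_eq' (q : ℝ) (hq0 : 0 < q) (hq : q < 1/2) :
    (∑' n, (catalan n : ℝ) * ((1 - q) * q) ^ n) = 1 / (1 - q) := by
  rcases cat_sum_or' q hq0 hq with h | h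
  · exact h
  · exfalso
    obtain ⟨q', hq'⟩ : ∃ x : ℝ, x = q / 2 + 1 / 4 := ⟨_, rfl⟩
    have hq'0 : 0 < q' := by rw [hq']; linarith
    have hq'lt : q' < 1/2 := by rw [hq']; linarith
    have hqq' : q < q' := by rw [hq']; linarith
    have hxle : (1 - q) * q ≤ (1 - q') * q' := by
      nlinarith [mul_pos (sub_pos.mpr hqq') (show (0:ℝ) < 1 - q - q' by linarith)]
    have hx0 : (0:ℝ) ≤ (1 - q) * q := by nlinarith
    have hx'lt : (1 - q') * q' < 1/4 := by nlinarith [sq_nonneg (1/2 - q')]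
    have hxlt : (1 - q) * q < 1/4 := lt_of_le_of_lt hxle hx'lt
    have hx'0 : (0:ℝ) ≤ (1 - q') * q' := by nlinarith
    have hmono : (∑' n, (catalan n : ℝ) * ((1 - q) * q) ^ n)
        ≤ ∑' n, (catalan n : ℝ) * ((1 - q') * q') ^ n := by
      apply Summable.tsum_le_tsum _ (summable_cat' hx0 hxlt) (summable_cat' hx'0 hx'lt)
      intro n
      exact mul_le_mul_of_nonneg_left (pow_le_pow_left₀ hx0 hxle n) (by positivity)
    have hub : (∑' n, (catalan n : ℝ) * ((1 - q') * q') ^ n) ≤ 1 / q' := by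
      rcases cat_sum_or' q' hq'0 hq'lt with h' | h'
      · rw [h']
        apply div_le_div_of_nonneg_left (by norm_num) hq'0
        linarith
      · rw [h']
    have h1 : 1 / q' < 1 / q := by
      apply div_lt_div_of_pos_left (by norm_num) hq0 hqq'
    rw [h] at hmono
    linarith

theorem lsmCycleProb_sum_one (p q : ℝ) (hpq : p + q = 1)
    (hq0 : 0 < q) (hq : q < 1/2) :
    HasSum (fun n : ℕ => lsmCycleProb p q (n + 1)) 1 := by
  have hp : p = 1 - q := by linarith
  have hx0 : (0:ℝ) ≤ (1 - q) * q := by nlinarith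
  have hxlt : (1 - q) * q < 1/4 := by nlinarith [sq_nonneg (1/2 - q)]
  have hsum := (summable_cat' hx0 hxlt).hasSum
  rw [cat_sum_eq' q hq0 hq] at hsum
  have h2 := hsum.mul_left ((1 - q) * q)
  have hval : ((1 - q) * q) * (1 / (1 - q)) = q := by
    have : (1:ℝ) - q ≠ 0 := by linarith
    field_simp
  rw [hval] at h2
  have h3 : HasSum (fun n : ℕ => lsmCycleProb p q (n + 1 + 1)) q := by
    convert h2 using 2 with n
    · rfl
    simp only [lsmCycleProb, hp]
    rw [if_neg (by omega : ¬ (n + 1 + 1 = 1))]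
    have e1 : n + 1 + 1 - 1 = n + 1 := rfl
    have e2 : n + 1 + 1 - 2 = n := rfl
    rw [e1, e2]
    ring
  have h4 := (hasSum_nat_add_iff (f := fun n => lsmCycleProb p q (n + 1)) 1).mp h3
  have h5 : q + ∑ i ∈ Finset.range 1, lsmCycleProb p q (i + 1) = 1 := by
    simp [lsmCycleProb, hp]
  rwa [h5] at h4
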